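/- arXiv:1707.02952 — 2 statements merged into one kernel-verified Lean document; each statement's English description precedes it below -/
import Mathlib

section
/- Let (W,S) be a finite Coxeter system and I,J ⊆ S. For all s,t ∈ I∖J one has X_{IJ}^s = X_{IJ}^t in Ω(W,S); that is, the edge element X_{IJ}^s depends only on I and J and not on the choice of s ∈ I∖J. -/
open scoped TensorProduct

noncomputable section

namespace WGraphPaper

variable (k : Type*) [CommRing k] {B B₁ B₂ : Type*}

/-! ### Gyoja's W-graph algebra with coefficients in `k`
(`Omega ℤ M` is the W-graph algebra `Ω(W,S)` itself, `Omega k M` is `kΩ`). -/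

/-- The free ring `k⟨e_b, x_b | b ∈ B⟩`; `Sum.inl b` encodes the generator `e_b` and
`Sum.inr b` encodes the generator `x_b`. -/
abbrev FreeGen (B : Type*) := FreeAlgebra k (B ⊕ B)

def eGen (b : B) : FreeGen k B := FreeAlgebra.ι k (Sum.inl b)
def xGen (b : B) : FreeGen k B := FreeAlgebra.ι k (Sum.inr b)

/-- `altProd a b n` is the alternating product `a * b * a * ⋯` with `n` factors. -/
def altProd {A : Type*} [Monoid A] : A → A → ℕ → A
  | _, _, 0 => 1
  | a, b, n + 1 => a * altProd b a n

/-- The braid commutator `Δ_m(a,b) = (a b a ⋯) - (b a b ⋯)` (`m` factors each). -/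
def braidComm {A : Type*} [Ring A] (m : ℕ) (a b : A) : A := altProd a b m - altProd b a m

/-- `ι(T_b) = -v⁻¹ e_b + v (1 - e_b) + x_b`, an element of `(FreeGen k B)[v,v⁻¹]`. -/
def iotaT (b : B) : LaurentPolynomial (FreeGen k B) :=
  LaurentPolynomial.C (-(eGen k b)) * LaurentPolynomial.T (-1)
    + LaurentPolynomial.C (1 - eGen k b) * LaurentPolynomial.T 1
    + LaurentPolynomial.C (xGen k b)

/-- The coefficient of `v^n` in a Laurent polynomial. -/
def lcoeff {R : Type*} [Semiring R] (p : LaurentPolynomial R) (n : ℤ) : R :=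
  (show ℤ →₀ R from p.coeff) n

/-- The defining relations of Gyoja's W-graph algebra: the relations (a) and (b) together
with the vanishing of all Laurent coefficients `y^γ(s,t)` of the braid commutators
`Δ_{m_{st}}(ι(T_s), ι(T_t))` (for `m_{st} < ∞`, i.e. `M s t ≠ 0`). -/
inductive OmegaRel (M : CoxeterMatrix B) : FreeGen k B → FreeGen k B → Prop
  | e_idem (b : B) : OmegaRel M (eGen k b * eGen k b) (eGen k b)
  | e_comm (b b' : B) : OmegaRel M (eGen k b * eGen k b') (eGen k b' * eGen k b)
  | ex (b : B) : OmegaRel M (eGen k b * xGen k b) (xGen k b)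
  | xe (b : B) : OmegaRel M (xGen k b * eGen k b) 0
  | braid (b b' : B) (h : M b b' ≠ 0) (γ : ℤ) :
      OmegaRel M (lcoeff (braidComm (M b b') (iotaT k b) (iotaT k b')) γ) 0

/-- Gyoja's W-graph algebra `Ω(W,S)` (for `k = ℤ`), resp. `kΩ(W,S)`, defined from
the Coxeter matrix of `(W,S)`. -/
abbrev Omega (M : CoxeterMatrix B) := RingQuot (OmegaRel k M)

/-- The image of the generator `e_b` in `Ω`. -/
def eOm (M : CoxeterMatrix B) (b : B) : Omega k M :=
  RingQuot.mkRingHom (OmegaRel k M) (eGen k b)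

/-- The image of the generator `x_b` in `Ω`. -/
def xOm (M : CoxeterMatrix B) (b : B) : Omega k M :=
  RingQuot.mkRingHom (OmegaRel k M) (xGen k b)

lemma commute_eOm (M : CoxeterMatrix B) (b b' : B) : Commute (eOm k M b) (eOm k M b') := by
  show _ = _
  rw [eOm, eOm, ← map_mul, ← map_mul]
  exact RingQuot.mkRingHom_rel (OmegaRel.e_comm b b')

lemma commute_oneSubEOm (M : CoxeterMatrix B) (b b' : B) :
    Commute (1 - eOm k M b) (1 - eOm k M b') :=
  (Commute.one_left _).sub_left ((Commute.one_right _).sub_right (commute_eOm k M b b'))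

variable [Fintype B] [DecidableEq B] [DecidableEq B₁] [DecidableEq B₂]

/-- The idempotent `E_I = (∏_{t ∈ I} e_t) (∏_{t ∈ S∖I} (1 - e_t))`. -/
def EOm (M : CoxeterMatrix B) (I : Finset B) : Omega k M :=
  (I.noncommProd (fun b => eOm k M b) (fun _ _ _ _ _ => commute_eOm k M _ _)) *
    ((Iᶜ).noncommProd (fun b => 1 - eOm k M b) (fun _ _ _ _ _ => commute_oneSubEOm k M _ _))

/-- The edge element `X_{IJ}^s = E_I x_s E_J`. -/
def XOm (M : CoxeterMatrix B) (I J : Finset B) (s : B) : Omega k M :=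
  EOm k M I * xOm k M s * EOm k M J

/-- `I ← J` is an edge of the compatibility graph `Q_W`: `I ∖ J ≠ ∅` and no element of
`I ∖ J` commutes (in `W`, i.e. `m_{st} = 2`) with an element of `J ∖ I`. -/
def QEdge (M : CoxeterMatrix B) (I J : Finset B) : Prop :=
  (I \ J).Nonempty ∧ ∀ s ∈ I \ J, ∀ t ∈ J \ I, M s t ≠ 2

/-- `I ⇆ J`: `I` and `J` are joined by a pair of transversal edges of `Q_W`. -/
def Transversal (M : CoxeterMatrix B) (I J : Finset B) : Prop :=
  QEdge M I J ∧ (J \ I).Nonempty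

/-- The generators of the subalgebra `Ψ(W,S)`: all `E_I` and all transversal edge
elements `X_{IJ}`. -/
def psiGens (M : CoxeterMatrix B) : Set (Omega k M) :=
  {a | ∃ I : Finset B, a = EOm k M I} ∪
    {a | ∃ I J : Finset B, ∃ s : B, Transversal M I J ∧ s ∈ I \ J ∧ a = XOm k M I J s}

/-- The subring `Ψ(W,S) ⊆ Ω(W,S)` generated by all `E_I` and all transversal edges. -/
def Psi (M : CoxeterMatrix B) : Subring (Omega k M) := Subring.closure (psiGens k M)

/-- The subalgebra `kΨ(W,S) ⊆ kΩ(W,S)` generated by all `E_I` and all transversal edges. -/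
def PsiAlg (M : CoxeterMatrix B) : Subalgebra k (Omega k M) :=
  Algebra.adjoin k (psiGens k M)

/-! ### Products of Coxeter systems -/

/-- The Coxeter matrix of the product `W₁ × W₂`, on `S = S₁ ⊔ S₂` (each element of `S₁`
commutes with each element of `S₂`). -/
def prodMatrix (M₁ : CoxeterMatrix B₁) (M₂ : CoxeterMatrix B₂) : CoxeterMatrix (B₁ ⊕ B₂) where
  M i j :=
    match i, j with
    | Sum.inl a, Sum.inl b => M₁ a b
    | Sum.inr a, Sum.inr b => M₂ a b
    | _, _ => 2
  isSymm := by
    unfold Matrix.IsSymm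
    ext i j
    rcases i with a | a <;> rcases j with b | b <;>
      simp only [Matrix.transpose_apply] <;>
      first
        | exact M₁.symmetric b a
        | exact M₂.symmetric b a
        | rfl
  diagonal i := by rcases i with a | a <;> simp [CoxeterMatrix.diagonal]
  off_diagonal i j h := by
    rcases i with a | a <;> rcases j with b | b
    · exact M₁.off_diagonal a b (by rintro rfl; exact h rfl)
    · simp
    · simp
    · exact M₂.off_diagonal a b (by rintro rfl; exact h rfl)

def inlEmb : B₁ ↪ B₁ ⊕ B₂ := ⟨Sum.inl, Sum.inl_injective⟩
def inrEmb : B₂ ↪ B₁ ⊕ B₂ := ⟨Sum.inr, Sum.inr_injective⟩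

/-- The subset `I ⊔ K` of `S = S₁ ⊔ S₂`, for `I ⊆ S₁` and `K ⊆ S₂`. -/
def fjoin (I : Finset B₁) (K : Finset B₂) : Finset (B₁ ⊕ B₂) :=
  I.map inlEmb ∪ K.map inrEmb

/-- The part `I₁ = I ∩ S₁` of a subset `I ⊆ S = S₁ ⊔ S₂`. -/
def part1 (I : Finset (B₁ ⊕ B₂)) : Finset B₁ :=
  I.preimage Sum.inl Sum.inl_injective.injOn

/-- The part `I₂ = I ∩ S₂` of a subset `I ⊆ S = S₁ ⊔ S₂`. -/
def part2 (I : Finset (B₁ ⊕ B₂)) : Finset B₂ :=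
  I.preimage Sum.inr Sum.inr_injective.injOn

variable (M₁ : CoxeterMatrix B₁) (M₂ : CoxeterMatrix B₂)

/-- `f` is the parabolic morphism `ι₁ : Ω₁ → Ω` (it sends `e_s ↦ e_s`, `x_s ↦ x_s`
for `s ∈ S₁`). -/
def Parab1Cond (f : Omega k M₁ → Omega k (prodMatrix M₁ M₂)) : Prop :=
  ∀ b : B₁, f (eOm k M₁ b) = eOm k (prodMatrix M₁ M₂) (Sum.inl b) ∧
    f (xOm k M₁ b) = xOm k (prodMatrix M₁ M₂) (Sum.inl b)

/-- `f` is the parabolic morphism `ι₂ : Ω₂ → Ω` (it sends `e_s ↦ e_s`, `x_s ↦ x_s`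
for `s ∈ S₂`). -/
def Parab2Cond (f : Omega k M₂ → Omega k (prodMatrix M₁ M₂)) : Prop :=
  ∀ b : B₂, f (eOm k M₂ b) = eOm k (prodMatrix M₁ M₂) (Sum.inr b) ∧
    f (xOm k M₂ b) = xOm k (prodMatrix M₁ M₂) (Sum.inr b)

/-- `t` is the morphism `τ : Ω → Ω₁ ⊗ Ω₂` of the paper: it sends `e_s ↦ e_s ⊗ 1`,
`x_s ↦ x_s ⊗ 1` for `s ∈ S₁` and `e_s ↦ 1 ⊗ e_s`, `x_s ↦ 1 ⊗ x_s` for `s ∈ S₂`. -/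
def TauCond (t : Omega k (prodMatrix M₁ M₂) → Omega k M₁ ⊗[k] Omega k M₂) : Prop :=
  (∀ b : B₁, t (eOm k (prodMatrix M₁ M₂) (Sum.inl b)) = eOm k M₁ b ⊗ₜ[k] 1 ∧
      t (xOm k (prodMatrix M₁ M₂) (Sum.inl b)) = xOm k M₁ b ⊗ₜ[k] 1) ∧
  (∀ b : B₂, t (eOm k (prodMatrix M₁ M₂) (Sum.inr b)) = 1 ⊗ₜ[k] eOm k M₂ b ∧
      t (xOm k (prodMatrix M₁ M₂) (Sum.inr b)) = 1 ⊗ₜ[k] xOm k M₂ b)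



/-- The coefficientwise extension of a ring homomorphism to Laurent polynomial rings. -/
def laurentMap {R A : Type*} [Semiring R] [Semiring A] (f : R →+* A) :
    LaurentPolynomial R →+* LaurentPolynomial A :=
  AddMonoidAlgebra.liftNCRingHom (LaurentPolynomial.C.comp f)
    { toFun := fun n => LaurentPolynomial.T (Multiplicative.toAdd n)
      map_one' := LaurentPolynomial.T_zero
      map_mul' := fun _ _ => LaurentPolynomial.T_add _ _ }
    (fun _ n => (LaurentPolynomial.commute_T (Multiplicative.toAdd n) _).symm)

/-- `k` is a good ring for `(W,S)`: it contains `2cos(2π/m_{st})` for all `s,t ∈ S`. -/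
def GoodRing (M : CoxeterMatrix B) (k : Subring ℂ) : Prop :=
  ∀ i j : B, M i j ≠ 0 → (2 * Complex.cos (2 * Real.pi / (M i j : ℂ))) ∈ k

/-- The irreducible complex characters of a finite group `G`. -/
def IrrChar (G : Type) [Group G] : Type :=
  {χ : G → ℂ // ∃ V : FDRep ℂ G, CategoryTheory.Simple V ∧ χ = FDRep.character V}

/-- The degree `d_λ` of an irreducible character `λ` (its value at `1`). -/
def IrrChar.degree {G : Type} [Group G] (χ : IrrChar G) : ℕ := ⌊(χ.val 1).re⌋₊

variable {ι : Type*}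

/-- (Z1): the `F^λ` are a decomposition of the identity into orthogonal idempotents. -/
def Z1 {A : Type*} [Ring A] (F : ι → A) : Prop :=
  (∀ l, F l * F l = F l) ∧ (∀ l m, l ≠ m → F l * F m = 0) ∧ ∑ᶠ l, F l = 1

variable [Fintype B] [DecidableEq B]

/-- (Z2): the decomposition is compatible with the one coming from the path-algebra
structure: `E_I F^λ = F^λ E_I`. -/
def Z2 (M : CoxeterMatrix B) (F : ι → Omega k M) : Prop :=
  ∀ l (I : Finset B), EOm k M I * F l = F l * EOm k M I

/-- (Z3), with a specified partial order `le`: only "downward edges" exist,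
i.e. `F^λ Ω F^μ ≠ 0 → λ ⪯ μ`. -/
def Z3At {A : Type*} [Ring A] (F : ι → A) (le : ι → ι → Prop) : Prop :=
  ∀ l m, (∃ a : A, F l * a * F m ≠ 0) → le l m

/-- (Z3): there is a partial order on `Irr(W)` such that only "downward edges" exist. -/
def Z3 {A : Type*} [Ring A] (F : ι → A) : Prop :=
  ∃ le : ι → ι → Prop, IsPartialOrder ι le ∧ Z3At F le

/-- (Z4): there are surjective `k`-algebra morphisms `k^{d_λ×d_λ} ↠ F^λ kΩ F^λ`. -/
def Z4 (M : CoxeterMatrix B) (F : ι → Omega k M) (d : ι → ℕ) : Prop :=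
  ∀ l, ∃ ψ : Matrix (Fin (d l)) (Fin (d l)) k →ₗ[k] Omega k M,
    (∀ x y, ψ (x * y) = ψ x * ψ y) ∧ ψ 1 = F l ∧
      Set.range ψ = {z | ∃ a : Omega k M, z = F l * a * F l}

/-- (Z5): `F^λ X_{IJ} F^λ ∈ kΨ(W,S)` for all edges `I ← J` of `Q_W`. -/
def Z5 (M : CoxeterMatrix B) (F : ι → Omega k M) : Prop :=
  ∀ l (I J : Finset B) (s : B), QEdge M I J → s ∈ I \ J →
    F l * XOm k M I J s * F l ∈ PsiAlg k M

/-- (Z6): `F^λ ∈ kΨ(W,S)`. -/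
def Z6 (M : CoxeterMatrix B) (F : ι → Omega k M) : Prop :=
  ∀ l, F l ∈ PsiAlg k M

/-- The family satisfies all of (Z1)–(Z6), i.e. the strong W-graph decomposition
conjecture holds via this family (`d` is the degree function on `Irr(W)`). -/
def StrongZ (M : CoxeterMatrix B) (F : ι → Omega k M) (d : ι → ℕ) : Prop :=
  Z1 F ∧ Z2 k M F ∧ Z3 F ∧ Z4 k M F d ∧ Z5 k M F ∧ Z6 k M F

/-- The maximal length (number of steps) of a strict chain for the relation `le`. -/
def orderHeight (le : ι → ι → Prop) : ℕ :=
  sSup {n | ∃ c : Fin (n + 1) → ι, Function.Injective c ∧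
    ∀ i j : Fin (n + 1), i < j → le (c i) (c j)}



/-! ### Auxiliary: Laurent polynomial coefficients -/

section LaurentAux

variable {R S' : Type*} [Semiring R] [Semiring S']

lemma lcoeff_apply (p : LaurentPolynomial R) (n : ℤ) : lcoeff p n = p.coeff n := rfl

lemma lcoeff_add (p q : LaurentPolynomial R) (n : ℤ) :
    lcoeff (p + q) n = lcoeff p n + lcoeff q n := rfl

/-- `p` has all coefficients above `n` equal to zero. -/
def DegLE (p : LaurentPolynomial R) (n : ℤ) : Prop := ∀ k : ℤ, n < k → lcoeff p k = 0

lemma lcoeff_single (a : R) (nn k : ℤ) :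
    lcoeff (LaurentPolynomial.C a * LaurentPolynomial.T nn) k = if nn = k then a else 0 := by
  rw [← LaurentPolynomial.single_eq_C_mul_T, lcoeff_apply]
  exact Finsupp.single_apply

lemma C_eq_C_mul_T (a : R) :
    (LaurentPolynomial.C a : LaurentPolynomial R) =
      LaurentPolynomial.C a * LaurentPolynomial.T 0 := by
  rw [LaurentPolynomial.T_zero, mul_one]

lemma degLE_single (a : R) (nn : ℤ) :
    DegLE (LaurentPolynomial.C a * LaurentPolynomial.T nn) nn := by
  intro k hk
  rw [lcoeff_single]
  exact if_neg (by omega)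

lemma degLE_C (a : R) : DegLE (LaurentPolynomial.C a) 0 := by
  rw [C_eq_C_mul_T]; exact degLE_single a 0

lemma lcoeff_C (a : R) : lcoeff (LaurentPolynomial.C a) 0 = a := by
  rw [C_eq_C_mul_T, lcoeff_single, if_pos rfl]

lemma degLE_mono {p : LaurentPolynomial R} {n n' : ℤ} (h : DegLE p n) (hnn : n ≤ n') :
    DegLE p n' := fun k hk => h k (lt_of_le_of_lt hnn hk)

lemma degLE_add {p q : LaurentPolynomial R} {n : ℤ} (hp : DegLE p n) (hq : DegLE q n) :
    DegLE (p + q) n := fun k hk => by rw [lcoeff_add, hp k hk, hq k hk, add_zero]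

lemma mem_support_le {p : LaurentPolynomial R} {n : ℤ} (hp : DegLE p n) {a : ℤ}
    (ha : a ∈ p.coeff.support) : a ≤ n := by
  by_contra h
  exact Finsupp.mem_support_iff.mp ha (hp a (by omega))

lemma degLE_mul {p q : LaurentPolynomial R} {n m : ℤ} (hp : DegLE p n) (hq : DegLE q m) :
    DegLE (p * q) (n + m) := by
  intro kk hkk
  rw [lcoeff_apply, AddMonoidAlgebra.mul_apply, Finsupp.sum]
  refine Finset.sum_eq_zero fun a₁ ha₁ => ?_
  rw [Finsupp.sum]
  refine Finset.sum_eq_zero fun a₂ ha₂ => ?_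
  have h1 := mem_support_le hp ha₁
  have h2 := mem_support_le hq ha₂
  exact if_neg (by omega)

lemma lcoeff_mul {p q : LaurentPolynomial R} {n m : ℤ} (hp : DegLE p n) (hq : DegLE q m) :
    lcoeff (p * q) (n + m) = lcoeff p n * lcoeff q m := by
  rw [lcoeff_apply, AddMonoidAlgebra.mul_apply, Finsupp.sum, Finset.sum_eq_single n]
  · rw [Finsupp.sum, Finset.sum_eq_single m]
    · rw [if_pos rfl]; rfl
    · intro a₂ ha₂ hne
      have h2 := mem_support_le hq ha₂
      exact if_neg (by omega)
    · intro h
      rw [if_pos rfl, Finsupp.notMem_support_iff.mp h, mul_zero]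
  · intro a₁ ha₁ hne
    have h1 := mem_support_le hp ha₁
    rw [Finsupp.sum]
    refine Finset.sum_eq_zero fun a₂ ha₂ => ?_
    have h2 := mem_support_le hq ha₂
    exact if_neg (by omega)
  · intro h
    rw [Finsupp.sum]
    simp [Finsupp.notMem_support_iff.mp h]

lemma laurentMap_single (f : R →+* S') (n : ℤ) (a : R) :
    laurentMap f (LaurentPolynomial.C a * LaurentPolynomial.T n)
      = LaurentPolynomial.C (f a) * LaurentPolynomial.T n := by
  rw [← LaurentPolynomial.single_eq_C_mul_T, ← LaurentPolynomial.single_eq_C_mul_T]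
  show AddMonoidAlgebra.liftNC _ _ _ = _
  rw [AddMonoidAlgebra.liftNC_single]
  show LaurentPolynomial.C (f a) * LaurentPolynomial.T n = _
  rw [LaurentPolynomial.single_eq_C_mul_T]

lemma laurentMap_C (f : R →+* S') (a : R) :
    laurentMap f (LaurentPolynomial.C a) = LaurentPolynomial.C (f a) := by
  rw [C_eq_C_mul_T, laurentMap_single, ← C_eq_C_mul_T]

lemma lcoeff_laurentMap (f : R →+* S') (p : LaurentPolynomial R) (γ : ℤ) :
    lcoeff (laurentMap f p) γ = f (lcoeff p γ) := by
  induction p using AddMonoidAlgebra.induction_linear with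
  | zero =>
      rw [map_zero]
      show (0 : S') = f 0
      rw [map_zero]
  | add p q hp hq =>
      rw [map_add, lcoeff_add, hp, hq, ← map_add]
      exact congrArg f (lcoeff_add p q γ).symm
  | single n a =>
      rw [show (AddMonoidAlgebra.single n a : LaurentPolynomial R)
          = LaurentPolynomial.C a * LaurentPolynomial.T n from
        LaurentPolynomial.single_eq_C_mul_T a n]
      rw [laurentMap_single, lcoeff_single, lcoeff_single]
      split_ifs
      · rfl
      · rw [map_zero]

lemma map_altProd {A A' : Type*} [Monoid A] [Monoid A'] {F : Type*} [FunLike F A A']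
    [MonoidHomClass F A A'] (f : F) (a b : A) :
    ∀ n, f (altProd a b n) = altProd (f a) (f b) n := by
  intro n
  induction n generalizing a b with
  | zero => exact map_one f
  | succ n ih =>
      show f (a * altProd b a n) = f a * altProd (f b) (f a) n
      rw [map_mul, ih]

end LaurentAux

/-! ### Auxiliary: relations in `Ω` -/

section OmegaAux

variable {B : Type*} [DecidableEq B] (M : CoxeterMatrix B)

lemma eOm_mul_self (b : B) : eOm ℤ M b * eOm ℤ M b = eOm ℤ M b := by
  rw [eOm, ← map_mul]
  exact RingQuot.mkRingHom_rel (OmegaRel.e_idem b)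

lemma oneSub_eOm_sq (b : B) :
    (1 - eOm ℤ M b) * (1 - eOm ℤ M b) = 1 - eOm ℤ M b := by
  rw [mul_sub, mul_one, sub_mul, one_mul, eOm_mul_self, sub_self, sub_zero]

variable [Fintype B]

lemma EOm_mul_eOm {I : Finset B} {u : B} (hu : u ∈ I) :
    EOm ℤ M I * eOm ℤ M u = EOm ℤ M I := by
  have hQ : Commute (eOm ℤ M u)
      ((Iᶜ).noncommProd (fun b => 1 - eOm ℤ M b) (fun _ _ _ _ _ => commute_oneSubEOm ℤ M _ _)) :=
    Finset.noncommProd_commute _ _ _ _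
      (fun x _ => (Commute.one_right _).sub_right (commute_eOm ℤ M u x))
  rw [EOm, mul_assoc, ← hQ.eq, ← mul_assoc]
  congr 1
  have hP' : Commute (eOm ℤ M u)
      ((I.erase u).noncommProd (fun b => eOm ℤ M b)
        (fun _ _ _ _ _ => commute_eOm ℤ M _ _)) :=
    Finset.noncommProd_commute _ _ _ _ (fun x _ => commute_eOm ℤ M u x)
  rw [← Finset.mul_noncommProd_erase I hu (fun b => eOm ℤ M b)
      (fun _ _ _ _ _ => commute_eOm ℤ M _ _) (fun _ _ _ _ _ => commute_eOm ℤ M _ _),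
    mul_assoc, ← hP'.eq, ← mul_assoc, eOm_mul_self]

lemma EOm_mul_oneSub {I : Finset B} {u : B} (hu : u ∈ I) :
    EOm ℤ M I * (1 - eOm ℤ M u) = 0 := by
  rw [mul_sub, mul_one, EOm_mul_eOm M hu, sub_self]

lemma oneSub_mul_EOm {J : Finset B} {u : B} (hu : u ∉ J) :
    (1 - eOm ℤ M u) * EOm ℤ M J = EOm ℤ M J := by
  have hP : Commute (1 - eOm ℤ M u)
      (J.noncommProd (fun b => eOm ℤ M b) (fun _ _ _ _ _ => commute_eOm ℤ M _ _)) :=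
    Finset.noncommProd_commute _ _ _ _
      (fun x _ => (Commute.one_left _).sub_left (commute_eOm ℤ M u x))
  rw [EOm, ← mul_assoc, hP.eq, mul_assoc]
  congr 1
  have hu' : u ∈ Jᶜ := Finset.mem_compl.mpr hu
  rw [← Finset.mul_noncommProd_erase Jᶜ hu' (fun b => 1 - eOm ℤ M b)
      (fun _ _ _ _ _ => commute_oneSubEOm ℤ M _ _)
      (fun _ _ _ _ _ => commute_oneSubEOm ℤ M _ _),
    ← mul_assoc, oneSub_eOm_sq]

lemma altProd_oneSub_mul_EOm (J : Finset B) :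
    ∀ (n : ℕ) (u w : B), u ∉ J → w ∉ J →
      altProd (1 - eOm ℤ M u) (1 - eOm ℤ M w) n * EOm ℤ M J = EOm ℤ M J := by
  intro n
  induction n with
  | zero => intro u w _ _; show (1 : Omega ℤ M) * EOm ℤ M J = EOm ℤ M J; rw [one_mul]
  | succ n ih =>
      intro u w hu hw
      show (1 - eOm ℤ M u) * altProd (1 - eOm ℤ M w) (1 - eOm ℤ M u) n * EOm ℤ M J = _
      rw [mul_assoc, ih w u hw hu, oneSub_mul_EOm M hu]

/-- The image of `ι(T_b)` in `(Ω)[v,v⁻¹]`. -/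
lemma laurentMap_iotaT (b : B) :
    laurentMap (RingQuot.mkRingHom (OmegaRel ℤ M)) (iotaT ℤ b)
      = LaurentPolynomial.C ((RingQuot.mkRingHom (OmegaRel ℤ M)) (-(eGen ℤ b)))
          * LaurentPolynomial.T (-1)
        + LaurentPolynomial.C (1 - eOm ℤ M b) * LaurentPolynomial.T 1
        + LaurentPolynomial.C (xOm ℤ M b) * LaurentPolynomial.T 0 := by
  rw [iotaT, map_add, map_add, laurentMap_single, laurentMap_single, laurentMap_C,
    map_sub, map_one]
  unfold eOm xOm
  rw [← C_eq_C_mul_T]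

lemma degLE_iotaT (b : B) :
    DegLE (laurentMap (RingQuot.mkRingHom (OmegaRel ℤ M)) (iotaT ℤ b)) 1 := by
  rw [laurentMap_iotaT]
  exact degLE_add (degLE_add (degLE_mono (degLE_single _ _) (by norm_num))
    (degLE_single _ _)) (degLE_mono (degLE_single _ _) (by norm_num))

lemma lcoeff_iotaT_one (b : B) :
    lcoeff (laurentMap (RingQuot.mkRingHom (OmegaRel ℤ M)) (iotaT ℤ b)) 1
      = 1 - eOm ℤ M b := by
  rw [laurentMap_iotaT, lcoeff_add, lcoeff_add, lcoeff_single, lcoeff_single, lcoeff_single]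
  norm_num

lemma degLE_lcoeff_altProd {R : Type*} [Semiring R] :
    ∀ (n : ℕ) (p q : LaurentPolynomial R) (a b : R), DegLE p 1 → DegLE q 1 →
      lcoeff p 1 = a → lcoeff q 1 = b →
      DegLE (altProd p q n) (n : ℤ) ∧ lcoeff (altProd p q n) (n : ℤ) = altProd a b n := by
  intro n
  induction n with
  | zero =>
      intro p q a b _ _ _ _
      constructor
      · show DegLE (1 : LaurentPolynomial R) _
        rw [show ((1 : LaurentPolynomial R)) = LaurentPolynomial.C 1 from (map_one _).symm]
        exact degLE_mono (degLE_C 1) (by norm_num)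
      · show lcoeff (1 : LaurentPolynomial R) _ = (1 : R)
        rw [show ((1 : LaurentPolynomial R)) = LaurentPolynomial.C 1 from (map_one _).symm]
        exact lcoeff_C 1
  | succ n ih =>
      intro p q a b hp hq ha hb
      obtain ⟨h1, h2⟩ := ih q p b a hq hp hb ha
      have hcast : ((n + 1 : ℕ) : ℤ) = 1 + (n : ℤ) := by push_cast; ring
      constructor
      · show DegLE (p * altProd q p n) _
        rw [hcast]
        exact degLE_mul hp h1
      · show lcoeff (p * altProd q p n) _ = a * altProd b a n
        rw [hcast, lcoeff_mul hp h1, ha, h2]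

/-- The key coefficient computation. -/
lemma key_lcoeff (I J : Finset B) (u w : B) (hu : u ∈ I) (hu' : u ∉ J) (hw' : w ∉ J) (n : ℕ) :
    lcoeff (LaurentPolynomial.C (EOm ℤ M I) *
        altProd (laurentMap (RingQuot.mkRingHom (OmegaRel ℤ M)) (iotaT ℤ u))
                (laurentMap (RingQuot.mkRingHom (OmegaRel ℤ M)) (iotaT ℤ w)) (n + 1) *
        LaurentPolynomial.C (EOm ℤ M J)) ((n : ℤ))
      = EOm ℤ M I * xOm ℤ M u * EOm ℤ M J := by
  set Au := laurentMap (RingQuot.mkRingHom (OmegaRel ℤ M)) (iotaT ℤ u) with hAu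
  set Aw := laurentMap (RingQuot.mkRingHom (OmegaRel ℤ M)) (iotaT ℤ w) with hAw
  set EI := EOm ℤ M I with hEI
  set EJ := EOm ℤ M J with hEJ
  have hCEIAu : LaurentPolynomial.C EI * Au
      = LaurentPolynomial.C (EI * (RingQuot.mkRingHom (OmegaRel ℤ M)) (-(eGen ℤ u)))
          * LaurentPolynomial.T (-1)
        + LaurentPolynomial.C (EI * xOm ℤ M u) * LaurentPolynomial.T 0 := by
    rw [hAu, laurentMap_iotaT, mul_add, mul_add, ← mul_assoc, ← mul_assoc, ← mul_assoc,
      ← map_mul, ← map_mul, ← map_mul, hEI, EOm_mul_oneSub M hu, map_zero, zero_mul, add_zero]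
  obtain ⟨hQ1, hQ2⟩ := degLE_lcoeff_altProd n Aw Au (1 - eOm ℤ M w) (1 - eOm ℤ M u)
    (degLE_iotaT M w) (degLE_iotaT M u) (lcoeff_iotaT_one M w) (lcoeff_iotaT_one M u)
  have hsplit : LaurentPolynomial.C EI * altProd Au Aw (n + 1) * LaurentPolynomial.C EJ
      = (LaurentPolynomial.C (EI * (RingQuot.mkRingHom (OmegaRel ℤ M)) (-(eGen ℤ u)))
            * LaurentPolynomial.T (-1)) *
          (altProd Aw Au n * LaurentPolynomial.C EJ)
        + (LaurentPolynomial.C (EI * xOm ℤ M u) * LaurentPolynomial.T 0) *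
          (altProd Aw Au n * LaurentPolynomial.C EJ) := by
    rw [show altProd Au Aw (n + 1) = Au * altProd Aw Au n from rfl, ← mul_assoc, hCEIAu,
      add_mul, add_mul,
      mul_assoc (LaurentPolynomial.C (EI * (RingQuot.mkRingHom (OmegaRel ℤ M)) (-(eGen ℤ u)))
        * LaurentPolynomial.T (-1)) (altProd Aw Au n) (LaurentPolynomial.C EJ),
      mul_assoc (LaurentPolynomial.C (EI * xOm ℤ M u) * LaurentPolynomial.T 0)
        (altProd Aw Au n) (LaurentPolynomial.C EJ)]
  rw [hsplit, lcoeff_add]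
  have hQCdeg : DegLE (altProd Aw Au n * LaurentPolynomial.C EJ) ((n : ℤ) + 0) :=
    degLE_mul hQ1 (degLE_C EJ)
  have h1 : lcoeff ((LaurentPolynomial.C (EI * (RingQuot.mkRingHom (OmegaRel ℤ M)) (-(eGen ℤ u)))
        * LaurentPolynomial.T (-1)) *
      (altProd Aw Au n * LaurentPolynomial.C EJ)) ((n : ℤ)) = 0 := by
    have hd := degLE_mul
      (degLE_single (EI * (RingQuot.mkRingHom (OmegaRel ℤ M)) (-(eGen ℤ u))) (-1)) hQCdeg
    exact hd _ (by omega)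
  have h2 : lcoeff ((LaurentPolynomial.C (EI * xOm ℤ M u) * LaurentPolynomial.T 0) *
      (altProd Aw Au n * LaurentPolynomial.C EJ)) ((n : ℤ)) = EI * xOm ℤ M u * EJ := by
    have hmul := lcoeff_mul (degLE_single (EI * xOm ℤ M u) 0) hQCdeg
    rw [show (0 : ℤ) + ((n : ℤ) + 0) = (n : ℤ) from by ring] at hmul
    rw [hmul, lcoeff_single, if_pos rfl, lcoeff_mul hQ1 (degLE_C EJ), hQ2, lcoeff_C,
      altProd_oneSub_mul_EOm M J n w u hw' hu']
  rw [h1, h2, zero_add]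

end OmegaAux

/-! ### Auxiliary: the geometric representation, used to show `M s t ≠ 0` for finite `W`. -/

section GeomRep

variable {B : Type*} [DecidableEq B]

/-- The entries of the bilinear form of the geometric representation. -/
def ccM (M : CoxeterMatrix B) (i j : B) : ℝ :=
  if M i j = 0 then -1 else -Real.cos (Real.pi / (M i j : ℝ))

lemma ccM_symm (M : CoxeterMatrix B) (i j : B) : ccM M i j = ccM M j i := by
  unfold ccM; rw [M.symmetric i j]

lemma ccM_diag (M : CoxeterMatrix B) (i : B) : ccM M i i = 1 := by
  unfold ccM
  rw [M.diagonal i]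
  norm_num [Real.cos_pi]

variable [Fintype B]

/-- The simple root `α_i` (a standard basis vector). -/
def alB (i : B) : B → ℝ := fun b => if b = i then 1 else 0

/-- The linear functional `v ↦ 2 B(α_i, v)` (up to scale). -/
def ffM (M : CoxeterMatrix B) (i : B) (v : B → ℝ) : ℝ := ∑ j, ccM M i j * v j

lemma ffM_add (M : CoxeterMatrix B) (i : B) (v w : B → ℝ) :
    ffM M i (v + w) = ffM M i v + ffM M i w := by
  unfold ffM
  rw [← Finset.sum_add_distrib]
  exact Finset.sum_congr rfl fun j _ => by simp [mul_add]

lemma ffM_smul (M : CoxeterMatrix B) (i : B) (a : ℝ) (v : B → ℝ) :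
    ffM M i (a • v) = a * ffM M i v := by
  unfold ffM
  rw [Finset.mul_sum]
  exact Finset.sum_congr rfl fun j _ => by simp [smul_eq_mul]; ring

lemma ffM_al (M : CoxeterMatrix B) (i j : B) : ffM M i (alB j) = ccM M i j := by
  unfold ffM alB
  rw [Finset.sum_eq_single j]
  · simp
  · intro b _ hb; simp [hb]
  · intro h; exact absurd (Finset.mem_univ j) h

/-- The reflection `σ_i` of the geometric representation, as a plain self-map. -/
def sigM (M : CoxeterMatrix B) (i : B) : Function.End (B → ℝ) :=
  fun v => v - (2 * ffM M i v) • alB i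

lemma ffM_sub_smul (M : CoxeterMatrix B) (i j : B) (v : B → ℝ) (a : ℝ) :
    ffM M i (v - a • alB j) = ffM M i v - a * ccM M i j := by
  rw [sub_eq_add_neg, ← neg_smul, ffM_add, ffM_smul, ffM_al]
  ring

lemma TT_apply (M : CoxeterMatrix B) (i j : B) (v : B → ℝ) :
    (sigM M i * sigM M j) v
      = v + (-2 * ffM M i v + 4 * ccM M i j * ffM M j v) • alB i
          + (-2 * ffM M j v) • alB j := by
  show sigM M i (sigM M j v) = _
  unfold sigM
  rw [ffM_sub_smul]
  funext b
  simp only [Pi.add_apply, Pi.sub_apply, Pi.smul_apply, smul_eq_mul]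
  ring

/-- The coefficient recursion for powers of `σ_i σ_j`. -/
def aseq (c x y : ℝ) : ℕ → ℝ × ℝ
  | 0 => (-2*x + 4*c*y, -2*y)
  | n+1 =>
      ((aseq c x y n).1 - 2*(x + (aseq c x y n).1 + c*(aseq c x y n).2)
          + 4*c*(y + c*(aseq c x y n).1 + (aseq c x y n).2),
        (aseq c x y n).2 - 2*(y + c*(aseq c x y n).1 + (aseq c x y n).2))

lemma TT_pow_apply (M : CoxeterMatrix B) (i j : B) (v : B → ℝ) :
    ∀ n : ℕ, ((sigM M i * sigM M j) ^ (n + 1)) v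
      = v + (aseq (ccM M i j) (ffM M i v) (ffM M j v) n).1 • alB i
          + (aseq (ccM M i j) (ffM M i v) (ffM M j v) n).2 • alB j := by
  intro n
  induction n with
  | zero => rw [pow_one, TT_apply]; rfl
  | succ n ih =>
      rw [pow_succ']
      show (sigM M i * sigM M j) (((sigM M i * sigM M j) ^ (n + 1)) v) = _
      rw [ih, TT_apply, ffM_add, ffM_add, ffM_add, ffM_add, ffM_smul, ffM_smul, ffM_smul,
        ffM_smul, ffM_al, ffM_al, ffM_al, ffM_al, ccM_diag, ccM_diag, ccM_symm M j i]
      funext b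
      simp only [Pi.add_apply, Pi.smul_apply, smul_eq_mul, aseq]
      ring

lemma aseq_closed (c x y P Q : ℝ) (U : ℕ → ℝ)
    (hx : -2*x + 4*c*y = (2 - 4*c^2)*P - 2*c*Q)
    (hy : -2*y = 2*Q + 2*c*P)
    (hU0 : U 0 = 0) (hU1 : U 1 = 1)
    (hU : ∀ k : ℕ, U (k+1+1) = (4*c^2 - 2) * U (k+1) - U k) :
    ∀ k : ℕ, aseq c x y k
      = (P - U (k+1) * ((4*c^2-1)*P + 2*c*Q) + U k * P,
         Q - U (k+1) * (-2*c*P - Q) + U k * Q) := by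
  intro k
  induction k with
  | zero =>
      rw [hU0, hU1]
      show ((-2*x + 4*c*y : ℝ), (-2*y : ℝ)) = _
      refine Prod.ext ?_ ?_
      · show -2*x + 4*c*y = _
        linear_combination hx
      · show -2*y = _
        linear_combination hy
  | succ k ih =>
      have ih1 := congrArg Prod.fst ih
      have ih2 := congrArg Prod.snd ih
      simp only at ih1 ih2
      refine Prod.ext ?_ ?_
      · show (aseq c x y k).1 - 2*(x + (aseq c x y k).1 + c*(aseq c x y k).2)
            + 4*c*(y + c*(aseq c x y k).1 + (aseq c x y k).2) = _
        rw [ih1, ih2, hU k]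
        linear_combination hx
      · show (aseq c x y k).2 - 2*(y + c*(aseq c x y k).1 + (aseq c x y k).2) = _
        rw [ih1, ih2, hU k]
        linear_combination hy

lemma aseq_eventually_zero (m : ℕ) (hm : 2 ≤ m) (x y : ℝ) :
    aseq (-Real.cos (Real.pi / (m : ℝ))) x y (m - 1) = (0, 0) := by
  rcases eq_or_lt_of_le hm with hm2 | hm3
  · -- m = 2
    subst hm2
    norm_num [Real.cos_pi_div_two]
    show ((fun p : ℝ × ℝ => (p.1 - 2*(x + p.1 + 0*p.2) + 4*0*(y + 0*p.1 + p.2),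
        p.2 - 2*(y + 0*p.1 + p.2))) (-2*x + 4*0*y, -2*y)) = (0, 0)
    norm_num
    exact ⟨by ring, by ring⟩
  · -- 3 ≤ m
    obtain ⟨r, rfl⟩ : ∃ r : ℕ, m = r + 3 := ⟨m - 3, by omega⟩
    have hmr : ((r + 3 : ℕ) : ℝ) = (r : ℝ) + 3 := by push_cast; ring
    set θ : ℝ := Real.pi / ((r : ℝ) + 3) with hθ
    have hθpos : 0 < θ := div_pos Real.pi_pos (by positivity)
    have hθlt : θ < Real.pi / 2 := by
      rw [hθ]
      apply div_lt_div_of_pos_left Real.pi_pos (by norm_num)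
      have h0r : (0:ℝ) ≤ (r : ℝ) := Nat.cast_nonneg r
      linarith
    have hpi2 : Real.pi / 2 < Real.pi := by linarith [Real.pi_pos]
    have hsin2 : Real.sin (2*θ) ≠ 0 :=
      ne_of_gt (Real.sin_pos_of_pos_of_lt_pi (by linarith) (by linarith))
    have hsθ : 0 < Real.sin θ := Real.sin_pos_of_pos_of_lt_pi hθpos (by linarith)
    have hpyth := Real.sin_sq_add_cos_sq θ
    set c : ℝ := -Real.cos θ with hc
    have hc2 : 1 - c^2 ≠ 0 := by
      have : c^2 = 1 - Real.sin θ ^ 2 := by rw [hc]; nlinarith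
      nlinarith
    set P : ℝ := (c*y - x)/(1 - c^2) with hP
    set Q : ℝ := (c*x - y)/(1 - c^2) with hQ
    have hx : -2*x + 4*c*y = (2 - 4*c^2)*P - 2*c*Q := by
      rw [hP, hQ]
      field_simp
      ring
    have hy : -2*y = 2*Q + 2*c*P := by
      rw [hP, hQ]
      field_simp
      ring
    set U : ℕ → ℝ := fun n => Real.sin (2*(n : ℝ)*θ) / Real.sin (2*θ) with hU
    have hU0 : U 0 = 0 := by simp [hU]
    have hU1 : U 1 = 1 := by
      rw [hU]
      norm_num
      exact hsin2
    have hUrec : ∀ k : ℕ, U (k+1+1) = (4*c^2 - 2) * U (k+1) - U k := by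
      intro k
      have key : Real.sin (2*((k : ℝ)+2)*θ)
          = (4*c^2 - 2) * Real.sin (2*((k : ℝ)+1)*θ) - Real.sin (2*(k : ℝ)*θ) := by
        have h1 : 2*((k : ℝ)+2)*θ = 2*((k : ℝ)+1)*θ + 2*θ := by ring
        have h2 : 2*(k : ℝ)*θ = 2*((k : ℝ)+1)*θ - 2*θ := by ring
        rw [h1, h2, Real.sin_add, Real.sin_sub, Real.cos_two_mul, hc]
        ring
      rw [hU]
      simp only
      rw [show ((k+1+1 : ℕ) : ℝ) = (k : ℝ) + 2 from by push_cast; ring,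
        show ((k+1 : ℕ) : ℝ) = (k : ℝ) + 1 from by push_cast; ring, key]
      field_simp
    have hfull : 2*((r : ℝ)+3)*θ = 2*Real.pi := by
      rw [hθ]
      field_simp
    have hUm : U (r+3) = 0 := by
      rw [hU]
      simp only
      rw [show ((r+3 : ℕ) : ℝ) = (r : ℝ) + 3 from by push_cast; ring, hfull, Real.sin_two_pi,
        zero_div]
    have hUm1 : U (r+2) = -1 := by
      rw [hU]
      simp only
      rw [show 2*((r+2 : ℕ) : ℝ)*θ = 2*Real.pi - 2*θ from by push_cast; linarith [hfull],
        Real.sin_two_pi_sub, neg_div, div_self hsin2]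
    have hclosed := aseq_closed c x y P Q U hx hy hU0 hU1 hUrec (r+2)
    have hind : r + 3 - 1 = r + 2 := rfl
    rw [hmr] at *
    rw [hind, hclosed, show r+2+1 = r+3 from rfl, hUm, hUm1]
    refine Prod.ext ?_ ?_ <;> (show _ = (0:ℝ)) <;> ring

lemma sigM_sq (M : CoxeterMatrix B) (i : B) :
    sigM M i * sigM M i = (1 : Function.End (B → ℝ)) := by
  funext v
  show sigM M i (sigM M i v) = v
  unfold sigM
  rw [ffM_sub_smul, ccM_diag]
  funext b
  simp only [Pi.sub_apply, Pi.smul_apply, smul_eq_mul]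
  ring

lemma sigM_liftable (M : CoxeterMatrix B) : CoxeterMatrix.IsLiftable M (sigM M) := by
  intro i j
  by_cases hij : i = j
  · subst hij
    rw [M.diagonal i, pow_one, sigM_sq]
  · rcases Nat.eq_zero_or_pos (M i j) with h0 | hpos
    · rw [h0, pow_zero]
    · have hm : 2 ≤ M i j := by
        have := M.off_diagonal i j hij
        omega
      funext v
      have hpow := TT_pow_apply M i j v (M i j - 1)
      rw [show M i j - 1 + 1 = M i j from by omega] at hpow
      have hcc : ccM M i j = -Real.cos (Real.pi / (M i j : ℝ)) := if_neg (by omega)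
      rw [hpow, hcc, aseq_eventually_zero (M i j) hm]
      show v + (0:ℝ) • alB i + (0:ℝ) • alB j = v
      rw [zero_smul, zero_smul, add_zero, add_zero]

lemma aseq_neg_one : ∀ k : ℕ, aseq (-1) 1 (-1) k = (2*(k : ℝ)+2, 2*(k : ℝ)+2) := by
  intro k
  induction k with
  | zero =>
      show ((-2*1 + 4*(-1)*(-1) : ℝ), (-2*(-1) : ℝ)) = _
      norm_num
  | succ k ih =>
      have ih1 := congrArg Prod.fst ih
      have ih2 := congrArg Prod.snd ih
      simp only at ih1 ih2
      refine Prod.ext ?_ ?_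
      · show (aseq (-1) 1 (-1) k).1 - 2*(1 + (aseq (-1) 1 (-1) k).1 + (-1)*(aseq (-1) 1 (-1) k).2)
            + 4*(-1)*((-1) + (-1)*(aseq (-1) 1 (-1) k).1 + (aseq (-1) 1 (-1) k).2) = _
        rw [ih1, ih2]
        push_cast
        ring
      · show (aseq (-1) 1 (-1) k).2
            - 2*((-1) + (-1)*(aseq (-1) 1 (-1) k).1 + (aseq (-1) 1 (-1) k).2) = _
        rw [ih1, ih2]
        push_cast
        ring

theorem M_ne_zero_of_finite {B W : Type*} [DecidableEq B] [Fintype B] {M : CoxeterMatrix B}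
    [Group W] [Finite W] (cs : CoxeterSystem M W) {s t : B} (hst : s ≠ t) : M s t ≠ 0 := by
  intro h0
  have hlift := sigM_liftable M
  set g := cs.simple s * cs.simple t with hg
  have hN : g ^ Nat.card W = 1 := pow_card_eq_one'
  have hNpos : 0 < Nat.card W := Nat.card_pos
  obtain ⟨n, hn⟩ : ∃ n : ℕ, Nat.card W = n + 1 := ⟨Nat.card W - 1, by omega⟩
  have h1 : (sigM M s * sigM M t) ^ (n + 1) = (1 : Function.End (B → ℝ)) := by
    have h := congrArg (cs.lift ⟨sigM M, hlift⟩) hN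
    rw [map_pow, map_one, hg, map_mul, CoxeterSystem.lift_apply_simple,
      CoxeterSystem.lift_apply_simple, hn] at h
    exact h
  have hA := TT_pow_apply M s t (alB s) n
  rw [h1] at hA
  have hccst : ccM M s t = -1 := if_pos h0
  rw [ffM_al, ffM_al, ccM_diag, ccM_symm M t s, hccst, aseq_neg_one] at hA
  have hcoord := congrFun hA s
  have h1v : (1 : Function.End (B → ℝ)) (alB s) = alB s := rfl
  rw [h1v] at hcoord
  simp only [Pi.add_apply, Pi.smul_apply, smul_eq_mul, alB, if_neg hst, eq_self_iff_true,
    if_true, mul_one, mul_zero, add_zero] at hcoord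
  have : (0 : ℝ) < 2*(n : ℝ) + 2 := by positivity
  nlinarith [hcoord]

end GeomRep

/-- let `(W,S)` be a finite Coxeter system and `I, J ⊆ S`. For all
`s, t ∈ I ∖ J` one has `X_{IJ}^s = X_{IJ}^t` in `Ω(W,S)`: the edge element depends only
on `I` and `J`. -/
theorem statement3 {B : Type*} [Fintype B] [DecidableEq B] (M : CoxeterMatrix B)
    {W : Type*} [Group W] [Finite W] (cs : CoxeterSystem M W)
    (I J : Finset B) (s t : B) (hs : s ∈ I \ J) (ht : t ∈ I \ J) :
    XOm ℤ M I J s = XOm ℤ M I J t := by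
  by_cases hst : s = t
  · rw [hst]
  · have hsI := (Finset.mem_sdiff.mp hs).1
    have hsJ := (Finset.mem_sdiff.mp hs).2
    have htI := (Finset.mem_sdiff.mp ht).1
    have htJ := (Finset.mem_sdiff.mp ht).2
    have hm : M s t ≠ 0 := M_ne_zero_of_finite cs hst
    have hbraid : laurentMap (RingQuot.mkRingHom (OmegaRel ℤ M))
        (braidComm (M s t) (iotaT ℤ s) (iotaT ℤ t)) = 0 := by
      refine AddMonoidAlgebra.ext (Finsupp.ext fun γ => ?_)
      have hb := RingQuot.mkRingHom_rel (r := OmegaRel ℤ M) (OmegaRel.braid s t hm γ)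
      rw [map_zero] at hb
      exact (lcoeff_laurentMap (RingQuot.mkRingHom (OmegaRel ℤ M))
        (braidComm (M s t) (iotaT ℤ s) (iotaT ℤ t)) γ).trans hb
    rw [braidComm, map_sub, map_altProd, map_altProd] at hbraid
    have hEq := sub_eq_zero.mp hbraid
    obtain ⟨n, hn⟩ : ∃ n : ℕ, M s t = n + 1 := ⟨M s t - 1, by omega⟩
    rw [hn] at hEq
    have k1 := key_lcoeff M I J s t hsI hsJ htJ n
    have k2 := key_lcoeff M I J t s htI htJ hsJ n
    rw [XOm, XOm, ← k1, ← k2, hEq]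


end WGraphPaper

end
end

section
/- Let W = W₁ × W₂ be a finite Coxeter group with S = S₁ ⊔ S₂. If I ⇆ J is a pair of transversal edges in the compatibility graph Q_W, then the symmetric difference I Δ J is entirely contained in S₁ or entirely contained in S₂; equivalently, either I₂ = J₂ and I₁ ⇆ J₁ in Q_{W₁}, or I₁ = J₁ and I₂ ⇆ J₂ in Q_{W₂}. -/
open scoped TensorProduct

noncomputable section

namespace WGraphPaper

variable (k : Type*) [CommRing k] {B B₁ B₂ : Type*}

variable [Fintype B] [DecidableEq B] [DecidableEq B₁] [DecidableEq B₂]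

variable (M₁ : CoxeterMatrix B₁) (M₂ : CoxeterMatrix B₂)

variable {ι : Type*}

variable [Fintype B] [DecidableEq B]

/-- let `W = W₁ × W₂` be a finite Coxeter group with `S = S₁ ⊔ S₂`.
If `I ⇆ J` is a pair of transversal edges of `Q_W` then either `I₂ = J₂` and
`I₁ ⇆ J₁` in `Q_{W₁}`, or `I₁ = J₁` and `I₂ ⇆ J₂` in `Q_{W₂}` (the symmetric difference
is entirely contained in `S₁`, resp. `S₂`). -/
theorem statement4 {B₁ B₂ : Type*} [Fintype B₁] [DecidableEq B₁] [Fintype B₂]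
    [DecidableEq B₂] (M₁ : CoxeterMatrix B₁) (M₂ : CoxeterMatrix B₂)
    {W₁ W₂ : Type*} [Group W₁] [Group W₂] [Finite W₁] [Finite W₂]
    (cs₁ : CoxeterSystem M₁ W₁) (cs₂ : CoxeterSystem M₂ W₂)
    (cs : CoxeterSystem (prodMatrix M₁ M₂) (W₁ × W₂))
    (I J : Finset (B₁ ⊕ B₂)) (h : Transversal (prodMatrix M₁ M₂) I J) :
    (part2 I = part2 J ∧ Transversal M₁ (part1 I) (part1 J)) ∨
    (part1 I = part1 J ∧ Transversal M₂ (part2 I) (part2 J)) := by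
  obtain ⟨⟨⟨s₀, hs₀⟩, hcomm⟩, ⟨t₀, ht₀⟩⟩ := h
  have key : ∀ x ∈ I \ J, ∀ y ∈ J \ I,
      (∃ a b, x = Sum.inl a ∧ y = Sum.inl b) ∨ (∃ a b, x = Sum.inr a ∧ y = Sum.inr b) := by
    intro x hx y hy
    rcases x with a | a <;> rcases y with b | b
    · exact Or.inl ⟨a, b, rfl, rfl⟩
    · exact absurd rfl (hcomm _ hx _ hy)
    · exact absurd rfl (hcomm _ hx _ hy)
    · exact Or.inr ⟨a, b, rfl, rfl⟩
  rcases key s₀ hs₀ t₀ ht₀ with ⟨a₀, b₀, rfl, rfl⟩ | ⟨a₀, b₀, rfl, rfl⟩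
  · -- all differences in B₁
    have allL : ∀ x, x ∈ I \ J ∨ x ∈ J \ I → ∃ a, x = Sum.inl a := by
      intro x hx
      rcases hx with hx | hx
      · rcases key x hx _ ht₀ with ⟨a, _, hxa, _⟩ | ⟨_, b, _, hb⟩
        · exact ⟨a, hxa⟩
        · exact absurd hb (by simp)
      · rcases key _ hs₀ x hx with ⟨_, b, _, hxb⟩ | ⟨a, _, ha, _⟩
        · exact ⟨b, hxb⟩
        · exact absurd ha (by simp)
    left
    have mem1 : ∀ (K : Finset (B₁ ⊕ B₂)) (a : B₁), a ∈ part1 K ↔ Sum.inl a ∈ K := by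
      intro K a; simp [part1]
    have mem2 : ∀ (K : Finset (B₁ ⊕ B₂)) (b : B₂), b ∈ part2 K ↔ Sum.inr b ∈ K := by
      intro K b; simp [part2]
    constructor
    · ext b
      rw [mem2, mem2]
      constructor
      · intro hb
        by_contra hb'
        obtain ⟨a, ha⟩ := allL (Sum.inr b) (Or.inl (Finset.mem_sdiff.mpr ⟨hb, hb'⟩))
        exact absurd ha (by simp)
      · intro hb
        by_contra hb'
        obtain ⟨a, ha⟩ := allL (Sum.inr b) (Or.inr (Finset.mem_sdiff.mpr ⟨hb, hb'⟩))
        exact absurd ha (by simp)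
    · have memsd : ∀ (K L : Finset (B₁ ⊕ B₂)) (a : B₁),
          a ∈ part1 K \ part1 L ↔ Sum.inl a ∈ K \ L := by
        intro K L a; simp [Finset.mem_sdiff, mem1]
      refine ⟨⟨⟨a₀, (memsd I J a₀).mpr hs₀⟩, ?_⟩, ⟨b₀, (memsd J I b₀).mpr ht₀⟩⟩
      intro s hs t ht
      exact hcomm (Sum.inl s) ((memsd I J s).mp hs) (Sum.inl t) ((memsd J I t).mp ht)
  · -- all differences in B₂
    have allR : ∀ x, x ∈ I \ J ∨ x ∈ J \ I → ∃ a, x = Sum.inr a := by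
      intro x hx
      rcases hx with hx | hx
      · rcases key x hx _ ht₀ with ⟨_, b, _, hb⟩ | ⟨a, _, hxa, _⟩
        · exact absurd hb (by simp)
        · exact ⟨a, hxa⟩
      · rcases key _ hs₀ x hx with ⟨a, _, ha, _⟩ | ⟨_, b, _, hxb⟩
        · exact absurd ha (by simp)
        · exact ⟨b, hxb⟩
    right
    have mem1 : ∀ (K : Finset (B₁ ⊕ B₂)) (a : B₁), a ∈ part1 K ↔ Sum.inl a ∈ K := by
      intro K a; simp [part1]
    have mem2 : ∀ (K : Finset (B₁ ⊕ B₂)) (b : B₂), b ∈ part2 K ↔ Sum.inr b ∈ K := by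
      intro K b; simp [part2]
    constructor
    · ext b
      rw [mem1, mem1]
      constructor
      · intro hb
        by_contra hb'
        obtain ⟨a, ha⟩ := allR (Sum.inl b) (Or.inl (Finset.mem_sdiff.mpr ⟨hb, hb'⟩))
        exact absurd ha (by simp)
      · intro hb
        by_contra hb'
        obtain ⟨a, ha⟩ := allR (Sum.inl b) (Or.inr (Finset.mem_sdiff.mpr ⟨hb, hb'⟩))
        exact absurd ha (by simp)
    · have memsd : ∀ (K L : Finset (B₁ ⊕ B₂)) (a : B₂),
          a ∈ part2 K \ part2 L ↔ Sum.inr a ∈ K \ L := by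
        intro K L a; simp [Finset.mem_sdiff, mem2]
      refine ⟨⟨⟨a₀, (memsd I J a₀).mpr hs₀⟩, ?_⟩, ⟨b₀, (memsd J I b₀).mpr ht₀⟩⟩
      intro s hs t ht
      exact hcomm (Sum.inr s) ((memsd I J s).mp hs) (Sum.inr t) ((memsd J I t).mp ht)

end WGraphPaper

end
end
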